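/- Let λ₁ ≥ λ₂ > 0, r > 0, δ > 0. The two-dimensional Lebesgue measure of the set {t ∈ ℝ² : t₁²/λ₁ + t₂²/λ₂ ≤ r² and |t₁² − t₂²| < δ} is at most 2δ(1 + log(2 + 4λ₂r²/δ)). -/

import Mathlib

open MeasureTheory Set ENNReal

noncomputable def gmap : (ℝ × ℝ) →ₗ[ℝ] (ℝ × ℝ) :=
  ((LinearMap.fst ℝ ℝ ℝ) + (LinearMap.snd ℝ ℝ ℝ)).prod ((LinearMap.fst ℝ ℝ ℝ) - (LinearMap.snd ℝ ℝ ℝ))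

lemma gmap_apply (z : ℝ × ℝ) : gmap z = (z.1 + z.2, z.1 - z.2) := rfl

lemma gmap_det : LinearMap.det gmap = -2 := by
  have : LinearMap.det gmap = (LinearMap.toMatrix (Module.Basis.finTwoProd ℝ) (Module.Basis.finTwoProd ℝ) gmap).det := by
    rw [LinearMap.det_toMatrix]
  rw [this, Matrix.det_fin_two]
  simp [LinearMap.toMatrix_apply, Module.Basis.finTwoProd_zero, Module.Basis.finTwoProd_one, gmap_apply,
    Module.Basis.coe_finTwoProd_repr]
  norm_num

set_option maxHeartbeats 1000000 in
open MeasureTheory in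
theorem volume_ellipse_inter_hyperbola_bound
    (lam₁ lam₂ r δ : ℝ) (h12 : lam₂ ≤ lam₁) (h2 : 0 < lam₂) (hr : 0 < r) (hδ : 0 < δ) :
    volume {t : ℝ × ℝ | t.1 ^ 2 / lam₁ + t.2 ^ 2 / lam₂ ≤ r ^ 2 ∧ |t.1 ^ 2 - t.2 ^ 2| < δ} ≤
      ENNReal.ofReal (2 * δ * (1 + Real.log (2 + 4 * lam₂ * r ^ 2 / δ))) := by
  have h1 : 0 < lam₁ := lt_of_lt_of_le h2 h12
  set c : ℝ := δ / 4 with hc_def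
  set P : ℝ := lam₂ * r ^ 2 + δ / 2 with hP_def
  have hc : 0 < c := by positivity
  have hP : 0 < P := by positivity
  set ρ : ℝ := Real.sqrt P with hρ_def
  have hρ : 0 < ρ := Real.sqrt_pos.2 hP
  have hρ2 : ρ ^ 2 = P := Real.sq_sqrt hP.le
  set a : ℝ := c / ρ with ha_def
  have ha : 0 < a := by positivity
  have hcP : c < P := by
    rw [hc_def, hP_def]; nlinarith [mul_pos h2 (pow_pos hr 2)]
  have haρ : a ≤ ρ := by
    rw [ha_def, div_le_iff₀ hρ]
    nlinarith [hρ2]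
  have hca : c / a = ρ := by
    rw [ha_def]; field_simp
  -- the intermediate sets
  set T : Set (ℝ × ℝ) := {t | t.1 ^ 2 + t.2 ^ 2 ≤ 2 * lam₂ * r ^ 2 + δ ∧ |t.1 ^ 2 - t.2 ^ 2| < δ}
    with hT_def
  set V : Set (ℝ × ℝ) := {z | z.1 ^ 2 + z.2 ^ 2 ≤ P ∧ |z.1 * z.2| < c} with hV_def
  have hST : {t : ℝ × ℝ | t.1 ^ 2 / lam₁ + t.2 ^ 2 / lam₂ ≤ r ^ 2 ∧ |t.1 ^ 2 - t.2 ^ 2| < δ} ⊆ T := by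
    rintro ⟨t₁, t₂⟩ ⟨hell, hhyp⟩
    refine ⟨?_, hhyp⟩
    simp only at hell hhyp ⊢
    have h₂ : t₂ ^ 2 ≤ lam₂ * r ^ 2 := by
      have h0 : 0 ≤ t₁ ^ 2 / lam₁ := by positivity
      have hd : t₂ ^ 2 / lam₂ ≤ r ^ 2 := by linarith
      have := (div_le_iff₀ h2).1 hd
      nlinarith
    have h₁ : t₁ ^ 2 ≤ t₂ ^ 2 + δ := by
      have := abs_lt.1 hhyp
      linarith [this.2]
    linarith
  have hgT : gmap ⁻¹' T = V := by
    ext z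
    simp only [hT_def, hV_def, Set.mem_preimage, Set.mem_setOf_eq, gmap_apply]
    constructor
    · rintro ⟨hs, hp⟩
      have hexp : (z.1 + z.2) ^ 2 + (z.1 - z.2) ^ 2 = 2 * (z.1 ^ 2 + z.2 ^ 2) := by ring
      constructor
      · rw [hP_def]; linarith
      · have h4 : (z.1 + z.2) ^ 2 - (z.1 - z.2) ^ 2 = 4 * (z.1 * z.2) := by ring
        rw [h4, abs_mul, abs_of_nonneg (by norm_num : (0:ℝ) ≤ 4)] at hp
        rw [hc_def]; linarith
    · rintro ⟨hs, hp⟩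
      have hexp : (z.1 + z.2) ^ 2 + (z.1 - z.2) ^ 2 = 2 * (z.1 ^ 2 + z.2 ^ 2) := by ring
      rw [hP_def] at hs
      constructor
      · linarith
      · have h4 : (z.1 + z.2) ^ 2 - (z.1 - z.2) ^ 2 = 4 * (z.1 * z.2) := by ring
        rw [h4, abs_mul, abs_of_nonneg (by norm_num : (0:ℝ) ≤ 4)]
        rw [hc_def] at hp; linarith
  have hTV : volume T = 2 * volume V := by
    have hdet : LinearMap.det gmap ≠ 0 := by rw [gmap_det]; norm_num
    have := Measure.addHaar_preimage_linearMap (volume : Measure (ℝ × ℝ)) hdet T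
    rw [hgT, gmap_det] at this
    have habs2 : (2:ℝ≥0∞) * ENNReal.ofReal |((-2:ℝ))⁻¹| = 1 := by
      have h' : |((-2:ℝ))⁻¹| = 2⁻¹ := by norm_num
      rw [h', ENNReal.ofReal_inv_of_pos (by norm_num), ENNReal.ofReal_ofNat,
        ENNReal.mul_inv_cancel] <;> norm_num
    rw [this, ← mul_assoc, habs2, one_mul]
  -- measurability of V
  have hVmeas : MeasurableSet V := by
    rw [hV_def, Set.setOf_and]
    exact (measurableSet_le (by fun_prop) measurable_const).inter
      (measurableSet_lt ((measurable_fst.mul measurable_snd).abs) measurable_const)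
  -- the width function
  set m : ℝ → ℝ := fun u => if |u| ≤ a then ρ else c / |u| with hm_def
  -- slice bound
  have hslice : ∀ u : ℝ, volume {v : ℝ | (u, v) ∈ V} ≤
      (Set.Icc (-ρ) ρ).indicator (fun u => ENNReal.ofReal (2 * m u)) u := by
    intro u
    by_cases hu : u ∈ Set.Icc (-ρ) ρ
    · rw [Set.indicator_of_mem hu]
      have hsub : {v : ℝ | (u, v) ∈ V} ⊆ Set.Icc (-(m u)) (m u) := by
        intro v hv
        rw [hV_def] at hv
        obtain ⟨hv1, hv2⟩ := hv
        simp only at hv1 hv2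
        by_cases hua : |u| ≤ a
        · have hmu : m u = ρ := by simp only [hm_def]; rw [if_pos hua]
          rw [hmu]
          have hvρ : v ^ 2 ≤ ρ ^ 2 := by rw [hρ2]; nlinarith [sq_nonneg u]
          constructor <;> nlinarith
        · have hmu : m u = c / |u| := by simp only [hm_def]; rw [if_neg hua]
          have hu0 : 0 < |u| := lt_trans ha (not_le.1 hua)
          have hvb : |v| ≤ c / |u| := by
            rw [le_div_iff₀ hu0]
            calc |v| * |u| = |u * v| := by rw [abs_mul]; ring
              _ ≤ c := hv2.le
          rw [hmu]
          exact abs_le.1 hvb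
      calc volume {v : ℝ | (u, v) ∈ V} ≤ volume (Set.Icc (-(m u)) (m u)) := measure_mono hsub
        _ = ENNReal.ofReal (2 * m u) := by rw [Real.volume_Icc]; congr 1; ring
    · rw [Set.indicator_of_notMem hu]
      have hempty : {v : ℝ | (u, v) ∈ V} = ∅ := by
        ext v
        simp only [Set.mem_setOf_eq, Set.mem_empty_iff_false, iff_false]
        intro hv
        rw [hV_def] at hv
        have h1 := hv.1
        simp only at h1
        have hu2 : ¬(-ρ ≤ u ∧ u ≤ ρ) := by
          intro hh
          exact hu (Set.mem_Icc.2 hh)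
        have hu' : ρ < u ∨ u < -ρ := by
          rcases not_and_or.1 hu2 with h | h
          · right; linarith [not_le.1 h]
          · left; exact not_le.1 h
        have hP' : P < u ^ 2 := by
          rw [← hρ2]; rcases hu' with h | h <;> nlinarith
        nlinarith [sq_nonneg v]
      rw [hempty]
      simp
  have hVbound : volume V ≤ ∫⁻ u in Set.Icc (-ρ) ρ, ENNReal.ofReal (2 * m u) := by
    rw [Measure.volume_eq_prod, Measure.prod_apply hVmeas]
    calc (∫⁻ u, volume (Prod.mk u ⁻¹' V))
        ≤ ∫⁻ u, (Set.Icc (-ρ) ρ).indicator (fun u => ENNReal.ofReal (2 * m u)) u :=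
          lintegral_mono fun u => hslice u
      _ = _ := lintegral_indicator measurableSet_Icc _
  set L : ℝ := Real.log (ρ / a) with hL_def
  have hL : 0 ≤ L := Real.log_nonneg ((one_le_div ha).2 haρ)
  -- middle piece
  have hmid : ∫⁻ u in Set.Icc (-a) a, ENNReal.ofReal (2 * m u) ≤ ENNReal.ofReal (4 * c) := by
    have h1 : ∀ u ∈ Set.Icc (-a) a, ENNReal.ofReal (2 * m u) ≤ ENNReal.ofReal (2 * ρ) := by
      intro u hu
      rw [Set.mem_Icc] at hu
      have hmu : m u = ρ := by simp only [hm_def]; rw [if_pos (abs_le.2 ⟨hu.1, hu.2⟩)]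
      rw [hmu]
    calc ∫⁻ u in Set.Icc (-a) a, ENNReal.ofReal (2 * m u)
        ≤ ∫⁻ _ in Set.Icc (-a) a, ENNReal.ofReal (2 * ρ) := setLIntegral_mono' measurableSet_Icc h1
      _ = ENNReal.ofReal (2 * ρ) * volume (Set.Icc (-a) a) := setLIntegral_const _ _
      _ = ENNReal.ofReal (2 * ρ) * ENNReal.ofReal (2 * a) := by
          rw [Real.volume_Icc]; congr 1; ring
      _ = ENNReal.ofReal (4 * c) := by
          rw [← ENNReal.ofReal_mul (by positivity)]
          congr 1
          rw [ha_def]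
          field_simp
          ring
  -- right piece
  have hmc : ∀ u : ℝ, 0 < u → m u ≤ c / u := by
    intro u hu0
    have habsu : |u| = u := abs_of_pos hu0
    simp only [hm_def, habsu]
    split_ifs with h
    · rw [← hca]
      gcongr
    · exact le_refl _
  have hright : ∫⁻ u in Set.Icc a ρ, ENNReal.ofReal (2 * m u) ≤ ENNReal.ofReal (2 * c * L) := by
    have hmono : ∀ u ∈ Set.Icc a ρ, ENNReal.ofReal (2 * m u) ≤ ENNReal.ofReal (2 * (c / u)) := by
      intro u hu
      apply ENNReal.ofReal_le_ofReal
      have hu0 : 0 < u := lt_of_lt_of_le ha hu.1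
      have := hmc u hu0
      linarith
    have hint : IntegrableOn (fun u : ℝ => 2 * (c / u)) (Set.Icc a ρ) := by
      apply ContinuousOn.integrableOn_Icc
      apply ContinuousOn.mul continuousOn_const
      apply ContinuousOn.div continuousOn_const continuousOn_id
      intro x hx
      exact ne_of_gt (lt_of_lt_of_le ha hx.1)
    have hnn : 0 ≤ᵐ[volume.restrict (Set.Icc a ρ)] fun u : ℝ => 2 * (c / u) := by
      apply ae_restrict_of_forall_mem measurableSet_Icc
      intro x hx
      have hx0 : 0 < x := lt_of_lt_of_le ha hx.1
      positivity
    have heq : ∫⁻ u in Set.Icc a ρ, ENNReal.ofReal (2 * (c / u))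
        = ENNReal.ofReal (∫ u in Set.Icc a ρ, 2 * (c / u)) :=
      (ofReal_integral_eq_lintegral_ofReal hint hnn).symm
    have hval : (∫ u in Set.Icc a ρ, 2 * (c / u)) = 2 * c * L := by
      rw [MeasureTheory.integral_Icc_eq_integral_Ioc, ← intervalIntegral.integral_of_le haρ]
      have hrw : ∀ u : ℝ, 2 * (c / u) = (2 * c) * u⁻¹ := fun u => by
        rw [div_eq_mul_inv]; ring
      simp_rw [hrw]
      rw [intervalIntegral.integral_const_mul,
        integral_inv (Set.notMem_uIcc_of_lt ha hρ), hL_def]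
    calc ∫⁻ u in Set.Icc a ρ, ENNReal.ofReal (2 * m u)
        ≤ ∫⁻ u in Set.Icc a ρ, ENNReal.ofReal (2 * (c / u)) :=
          setLIntegral_mono' measurableSet_Icc hmono
      _ = ENNReal.ofReal (2 * c * L) := by rw [heq, hval]
  -- left piece
  have hleft : ∫⁻ u in Set.Icc (-ρ) (-a), ENNReal.ofReal (2 * m u) ≤ ENNReal.ofReal (2 * c * L) := by
    have hmono : ∀ u ∈ Set.Icc (-ρ) (-a), ENNReal.ofReal (2 * m u) ≤ ENNReal.ofReal (2 * (c / (-u))) := by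
      intro u hu
      apply ENNReal.ofReal_le_ofReal
      have hu0 : u < 0 := lt_of_le_of_lt hu.2 (by linarith)
      have hmeq : m u = m (-u) := by simp only [hm_def, abs_neg]
      have := hmc (-u) (by linarith)
      rw [hmeq] at *
      linarith [this]
    have hint : IntegrableOn (fun u : ℝ => 2 * (c / (-u))) (Set.Icc (-ρ) (-a)) := by
      apply ContinuousOn.integrableOn_Icc
      apply ContinuousOn.mul continuousOn_const
      apply ContinuousOn.div continuousOn_const continuousOn_id.neg
      intro x hx
      have : x ≤ -a := hx.2
      intro hx0
      have : -x = 0 := hx0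
      linarith
    have hnn : 0 ≤ᵐ[volume.restrict (Set.Icc (-ρ) (-a))] fun u : ℝ => 2 * (c / (-u)) := by
      apply ae_restrict_of_forall_mem measurableSet_Icc
      intro x hx
      have hx0 : 0 < -x := by linarith [hx.2]
      positivity
    have heq : ∫⁻ u in Set.Icc (-ρ) (-a), ENNReal.ofReal (2 * (c / (-u)))
        = ENNReal.ofReal (∫ u in Set.Icc (-ρ) (-a), 2 * (c / (-u))) :=
      (ofReal_integral_eq_lintegral_ofReal hint hnn).symm
    have hval : (∫ u in Set.Icc (-ρ) (-a), 2 * (c / (-u))) = 2 * c * L := by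
      rw [MeasureTheory.integral_Icc_eq_integral_Ioc,
        ← intervalIntegral.integral_of_le (by linarith : -ρ ≤ -a)]
      have : (∫ x in (-ρ)..(-a), 2 * (c / (-x))) = ∫ x in a..ρ, 2 * (c / x) := by
        rw [intervalIntegral.integral_comp_neg fun x => 2 * (c / x), neg_neg, neg_neg]
      rw [this]
      have hrw : ∀ u : ℝ, 2 * (c / u) = (2 * c) * u⁻¹ := fun u => by
        rw [div_eq_mul_inv]; ring
      simp_rw [hrw]
      rw [intervalIntegral.integral_const_mul,
        integral_inv (Set.notMem_uIcc_of_lt ha hρ), hL_def]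
    calc ∫⁻ u in Set.Icc (-ρ) (-a), ENNReal.ofReal (2 * m u)
        ≤ ∫⁻ u in Set.Icc (-ρ) (-a), ENNReal.ofReal (2 * (c / (-u))) :=
          setLIntegral_mono' measurableSet_Icc hmono
      _ = ENNReal.ofReal (2 * c * L) := by rw [heq, hval]
  -- combine
  have hsubset : Set.Icc (-ρ) ρ ⊆ Set.Icc (-ρ) (-a) ∪ (Set.Icc (-a) a ∪ Set.Icc a ρ) := by
    intro u hu
    simp only [Set.mem_Icc] at hu
    simp only [Set.mem_union, Set.mem_Icc]
    rcases le_total u (-a) with h | h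
    · exact Or.inl ⟨hu.1, h⟩
    rcases le_total u a with h' | h'
    · exact Or.inr (Or.inl ⟨by linarith, h'⟩)
    · exact Or.inr (Or.inr ⟨h', hu.2⟩)
  have hsplit : volume V ≤ ENNReal.ofReal (2 * c * L) + (ENNReal.ofReal (4 * c) + ENNReal.ofReal (2 * c * L)) := by
    calc volume V ≤ ∫⁻ u in Set.Icc (-ρ) ρ, ENNReal.ofReal (2 * m u) := hVbound
      _ ≤ ∫⁻ u in Set.Icc (-ρ) (-a) ∪ (Set.Icc (-a) a ∪ Set.Icc a ρ), ENNReal.ofReal (2 * m u) :=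
          lintegral_mono_set hsubset
      _ ≤ (∫⁻ u in Set.Icc (-ρ) (-a), ENNReal.ofReal (2 * m u))
          + ∫⁻ u in Set.Icc (-a) a ∪ Set.Icc a ρ, ENNReal.ofReal (2 * m u) :=
          lintegral_union_le _ _ _
      _ ≤ (∫⁻ u in Set.Icc (-ρ) (-a), ENNReal.ofReal (2 * m u))
          + ((∫⁻ u in Set.Icc (-a) a, ENNReal.ofReal (2 * m u))
            + ∫⁻ u in Set.Icc a ρ, ENNReal.ofReal (2 * m u)) :=
          add_le_add_right (lintegral_union_le _ _ _) _
      _ ≤ ENNReal.ofReal (2 * c * L) + (ENNReal.ofReal (4 * c) + ENNReal.ofReal (2 * c * L)) :=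
          add_le_add hleft (add_le_add hmid hright)
  -- final computation
  have hρa : ρ / a = 2 + 4 * lam₂ * r ^ 2 / δ := by
    have h1 : ρ / a = ρ ^ 2 / c := by
      rw [ha_def]
      field_simp
    rw [h1, hρ2, hP_def, hc_def]
    field_simp
    ring
  have hc2L : 0 ≤ 2 * c * L := by positivity
  calc volume {t : ℝ × ℝ | t.1 ^ 2 / lam₁ + t.2 ^ 2 / lam₂ ≤ r ^ 2 ∧ |t.1 ^ 2 - t.2 ^ 2| < δ}
      ≤ volume T := measure_mono hST
    _ = 2 * volume V := hTV
    _ ≤ 2 * (ENNReal.ofReal (2 * c * L) + (ENNReal.ofReal (4 * c) + ENNReal.ofReal (2 * c * L))) :=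
        mul_le_mul_right hsplit 2
    _ = ENNReal.ofReal (2 * δ * (1 + Real.log (2 + 4 * lam₂ * r ^ 2 / δ))) := by
        rw [← ENNReal.ofReal_add (by positivity) hc2L, ← ENNReal.ofReal_add hc2L (by positivity),
          show ((2:ℝ≥0∞)) = ENNReal.ofReal 2 by simp, ← ENNReal.ofReal_mul (by norm_num)]
        congr 1
        rw [hL_def, hρa, hc_def]
        ring
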